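/- Let G be a locally profinite group, k a commutative ring with 1, and π a smooth k-representation of G, regarded as discrete. Then applying the smooth-vectors functor to the continuous cochain complex yields an exact resolution 0 → π → C^0(G,π)^sm → C^1(G,π)^sm → ⋯ of π in the category Mod^sm_G(k) of smooth k-representations of G. -/

import Mathlib

open scoped BigOperators

namespace CtsCoh

/-- A locally profinite group: a topological group admitting a fundamental system of
neighborhoods of the identity consisting of compact open subgroups. -/
def LocallyProfinite (G : Type*) [Group G] [TopologicalSpace G] : Prop :=
  ∀ U ∈ nhds (1 : G), ∃ K : Subgroup G,
    IsCompact (K : Set G) ∧ IsOpen (K : Set G) ∧ (K : Set G) ⊆ U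

variable (G : Type*) [Group G] [TopologicalSpace G]
variable (V : Type*) [AddCommGroup V] [TopologicalSpace V] [DistribMulAction G V]

/-- The action of `G` on cochains: `(g • f)(g₀, …, gₙ) = g • f(g⁻¹g₀, …, g⁻¹gₙ)`. -/
def cAct {n : ℕ} (g : G) (f : (Fin n → G) → V) : (Fin n → G) → V :=
  fun x => g • f (fun i => g⁻¹ * x i)

/-- The differential of the complex of continuous cochains. -/
def dmap (n : ℕ) (f : (Fin (n + 1) → G) → V) : (Fin (n + 2) → G) → V :=
  fun x => ∑ i : Fin (n + 2), ((-1 : ℤ) ^ (i : ℕ)) • f (fun j => x (i.succAbove j))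

/-- A cochain `f ∈ C^n(G,V)` is a smooth vector, i.e. lies in `C^n(G,V)^sm = colim_K C^n(G,V)^K`
(the colimit being over compact open subgroups `K ≤ G`), iff it is continuous and fixed
by some compact open subgroup of `G`. -/
def IsSmoothCochain {n : ℕ} (f : (Fin (n + 1) → G) → V) : Prop :=
  Continuous f ∧ ∃ K : Subgroup G, IsCompact (K : Set G) ∧ IsOpen (K : Set G) ∧
    ∀ g ∈ K, cAct G V g f = f

/-- The augmentation `π → C^0(G,π)`, `v ↦ (g ↦ v)`. -/
def aug (v : V) : (Fin 1 → G) → V := fun _ => v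


set_option linter.unusedSectionVars false
set_option linter.unusedVariables false
set_option maxHeartbeats 1000000


section Comb

variable {G : Type*}

/-- Drop the `l`-th coordinate of a tuple. -/
def dp {m : ℕ} (x : Fin (m + 1) → G) (l : ℕ) : Fin m → G :=
  fun t => x (if (t : ℕ) < l then t.castSucc else t.succ)

/-- The prism tuple `(σx₀, …, σx_j, x_j, …, x_m)`. -/
def mixT (σ : G → G) (m : ℕ) (j : ℕ) (y : Fin (m + 1) → G) : Fin (m + 2) → G :=
  fun i => if (i : ℕ) ≤ j ∧ (i : ℕ) ≤ m then σ (y ⟨min (i : ℕ) m, by omega⟩)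
    else y ⟨(i : ℕ) - 1, by have := i.isLt; omega⟩

/-- Partial substitution: apply `σ` to the first `j` coordinates. -/
def qmix (σ : G → G) {m : ℕ} (j : ℕ) (x : Fin m → G) : Fin m → G :=
  fun i => if (i : ℕ) < j then σ (x i) else x i

/-- Prepend an element to a tuple. -/
def fcons {m : ℕ} (a : G) (z : Fin (m + 1) → G) : Fin (m + 2) → G :=
  fun i => if (i : ℕ) = 0 then a else z ⟨(i : ℕ) - 1, by have := i.isLt; omega⟩

lemma apply_mk_eq {m : ℕ} (x : Fin m → G) {a b : Fin m}
    (h : (a : ℕ) = (b : ℕ)) : x a = x b := by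
  have : a = b := Fin.ext h
  subst this; rfl

lemma dp_mixT_lt (σ : G → G) {m : ℕ} {l j : ℕ} (hj : j ≤ m + 1) (hl : l < j)
    (x : Fin (m + 2) → G) :
    dp (mixT σ (m + 1) j x) l = mixT σ m (j - 1) (dp x l) := by
  funext t
  have ht := t.isLt
  simp only [dp, mixT]
  repeat' split
  all_goals simp only [Fin.coe_castSucc, Fin.val_succ] at *
  all_goals try simp (disch := omega) only [if_pos, if_neg]
  all_goals
    first
      | rfl
      | omega
      | (exfalso; omega)
      | (repeat' apply congrArg
         apply Fin.ext
         simp only [apply_ite (Fin.val), Fin.coe_castSucc, Fin.val_succ, Fin.val_mk]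
         omega)

lemma dp_mixT_self (σ : G → G) {m : ℕ} {j : ℕ} (hj : j ≤ m + 1) (x : Fin (m + 2) → G) :
    dp (mixT σ (m + 1) j x) j = qmix σ j x := by
  funext t
  have ht := t.isLt
  simp only [dp, mixT, qmix]
  repeat' split
  all_goals simp only [Fin.coe_castSucc, Fin.val_succ] at *
  all_goals try simp (disch := omega) only [if_pos, if_neg]
  all_goals
    first
      | rfl
      | omega
      | (exfalso; omega)
      | (repeat' apply congrArg
         apply Fin.ext
         simp only [apply_ite (Fin.val), Fin.coe_castSucc, Fin.val_succ, Fin.val_mk]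
         omega)

lemma dp_mixT_succ (σ : G → G) {m : ℕ} {j : ℕ} (hj : j ≤ m + 1) (x : Fin (m + 2) → G) :
    dp (mixT σ (m + 1) j x) (j + 1) = qmix σ (j + 1) x := by
  funext t
  have ht := t.isLt
  simp only [dp, mixT, qmix]
  repeat' split
  all_goals simp only [Fin.coe_castSucc, Fin.val_succ] at *
  all_goals try simp (disch := omega) only [if_pos, if_neg]
  all_goals
    first
      | rfl
      | omega
      | (exfalso; omega)
      | (repeat' apply congrArg
         apply Fin.ext
         simp only [apply_ite (Fin.val), Fin.coe_castSucc, Fin.val_succ, Fin.val_mk]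
         omega)

lemma dp_mixT_gt (σ : G → G) {m : ℕ} {l j : ℕ} (hj : j ≤ m) (hl : j + 2 ≤ l)
    (x : Fin (m + 2) → G) :
    dp (mixT σ (m + 1) j x) l = mixT σ m j (dp x (l - 1)) := by
  funext t
  have ht := t.isLt
  simp only [dp, mixT]
  repeat' split
  all_goals simp only [Fin.coe_castSucc, Fin.val_succ] at *
  all_goals try simp (disch := omega) only [if_pos, if_neg]
  all_goals
    first
      | rfl
      | omega
      | (exfalso; omega)
      | (repeat' apply congrArg
         apply Fin.ext
         simp only [apply_ite (Fin.val), Fin.coe_castSucc, Fin.val_succ, Fin.val_mk]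
         omega)

lemma qmix_zero (σ : G → G) {m : ℕ} (x : Fin m → G) : qmix σ 0 x = x := by
  funext t; simp [qmix]

lemma qmix_top (σ : G → G) {m : ℕ} {j : ℕ} (hj : m ≤ j) (x : Fin m → G) :
    qmix σ j x = fun i => σ (x i) := by
  funext t; have := t.isLt; simp only [qmix]; rw [if_pos (by omega)]

lemma dp_fcons_zero [One G] (σ : G → G) {m : ℕ} (x : Fin (m + 1) → G) :
    dp (fcons (1 : G) fun i => σ (x i)) 0 = fun i => σ (x i) := by
  funext t
  have ht := t.isLt
  simp only [dp, fcons]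
  repeat' split
  all_goals simp only [Fin.coe_castSucc, Fin.val_succ] at *
  all_goals try simp (disch := omega) only [if_pos, if_neg]
  all_goals
    first
      | rfl
      | omega
      | (exfalso; omega)
      | (repeat' apply congrArg
         apply Fin.ext
         simp only [apply_ite (Fin.val), Fin.coe_castSucc, Fin.val_succ, Fin.val_mk]
         omega)

lemma dp_fcons_succ [One G] (σ : G → G) {m : ℕ} (l : ℕ) (x : Fin (m + 2) → G) :
    dp (fcons (1 : G) fun i => σ (x i)) (l + 1) = fcons (1 : G) fun i => σ ((dp x l) i) := by
  funext t
  have ht := t.isLt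
  simp only [dp, fcons]
  repeat' split
  all_goals simp only [Fin.coe_castSucc, Fin.val_succ] at *
  all_goals try simp (disch := omega) only [if_pos, if_neg]
  all_goals
    first
      | rfl
      | omega
      | (exfalso; omega)
      | (repeat' apply congrArg
         apply Fin.ext
         simp only [apply_ite (Fin.val), Fin.coe_castSucc, Fin.val_succ, Fin.val_mk]
         omega)

lemma dp_dp {m : ℕ} {i j : ℕ} (hij : i ≤ j) (x : Fin (m + 2) → G) :
    dp (dp x i) j = dp (dp x (j + 1)) i := by
  funext t
  have ht := t.isLt
  simp only [dp]
  repeat' split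
  all_goals simp only [Fin.coe_castSucc, Fin.val_succ] at *
  all_goals try simp (disch := omega) only [if_pos, if_neg]
  all_goals
    first
      | rfl
      | omega
      | (exfalso; omega)
      | (repeat' apply congrArg
         apply Fin.ext
         simp only [apply_ite (Fin.val), Fin.coe_castSucc, Fin.val_succ, Fin.val_mk]
         omega)

end Comb


section Sums

open Finset

variable {G : Type*} [Group G] {π : Type*} [AddCommGroup π]

lemma pow_neg_one_smul_smul (p q : ℕ) (v : π) :
    (-1 : ℤ) ^ p • (-1 : ℤ) ^ q • v = (-1 : ℤ) ^ (p + q) • v := by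
  rw [smul_smul, pow_add]

lemma neg_one_pow_succ_smul (p : ℕ) (v : π) :
    (-1 : ℤ) ^ (p + 1) • v = -((-1 : ℤ) ^ p • v) := by
  rw [pow_succ, mul_smul, neg_one_zsmul, smul_neg]

/-- `d ∘ d = 0`, in explicit `range`-sum form. -/
lemma dd_sum_zero (n : ℕ) (h : (Fin (n + 1) → G) → π) (x : Fin (n + 3) → G) :
    ∑ i ∈ range (n + 3), (-1 : ℤ) ^ i •
      ∑ j ∈ range (n + 2), (-1 : ℤ) ^ j • h (dp (dp x i) j) = 0 := by
  have : ∑ i ∈ range (n + 3), (-1 : ℤ) ^ i •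
      ∑ j ∈ range (n + 2), (-1 : ℤ) ^ j • h (dp (dp x i) j)
      = ∑ p ∈ range (n + 3) ×ˢ range (n + 2),
          (-1 : ℤ) ^ (p.1 + p.2) • h (dp (dp x p.1) p.2) := by
    rw [Finset.sum_product]
    refine Finset.sum_congr rfl fun i _ => ?_
    rw [Finset.smul_sum]
    refine Finset.sum_congr rfl fun j _ => ?_
    rw [pow_neg_one_smul_smul]
  rw [this]
  refine Finset.sum_involution
    (fun p _ => if p.1 ≤ p.2 then (p.2 + 1, p.1) else (p.2, p.1 - 1)) ?_ ?_ ?_ ?_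
  · rintro ⟨i, j⟩ hp
    simp only [Finset.mem_product, Finset.mem_range] at hp
    by_cases hij : i ≤ j
    · simp only [hij, if_pos]
      rw [← dp_dp hij x]
      have he : (j + 1) + i = (i + j) + 1 := by omega
      rw [he, neg_one_pow_succ_smul, add_neg_cancel]
    · simp only [hij, if_neg, if_false]
      have hij' : j ≤ i - 1 := by omega
      have hi1 : i - 1 + 1 = i := by omega
      have hd : dp (dp x j) (i - 1) = dp (dp x i) j := by
        rw [dp_dp hij' x, hi1]
      rw [hd]
      have he : i + j = (j + (i - 1)) + 1 := by omega
      rw [he, neg_one_pow_succ_smul, neg_add_cancel]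
  · rintro ⟨i, j⟩ hp hne
    by_cases hij : i ≤ j <;> simp only [hij, if_pos, if_neg, if_false] <;>
      intro hcontra <;>
      · have h1 := congrArg Prod.fst hcontra
        have h2 := congrArg Prod.snd hcontra
        simp only at h1 h2
        omega
  · rintro ⟨i, j⟩ hp
    simp only [Finset.mem_product, Finset.mem_range] at hp ⊢
    by_cases hij : i ≤ j <;> simp only [hij, if_pos, if_neg, if_false] <;>
      exact ⟨by omega, by omega⟩
  · rintro ⟨i, j⟩ hp
    by_cases hij : i ≤ j
    · simp only [hij, if_pos]
      rw [if_neg (by omega)]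
      simp
    · simp only [hij, if_neg, if_false]
      rw [if_pos (by omega)]
      ext <;> simp <;> omega

end Sums

section Prism

open Finset

variable {G : Type*} [Group G] {π : Type*} [AddCommGroup π]

lemma prism_cone_sum (σ : G → G) (n : ℕ) (f : (Fin (n + 2) → G) → π)
    (hf : ∀ z : Fin (n + 3) → G, ∑ l ∈ range (n + 3), (-1 : ℤ) ^ l • f (dp z l) = 0)
    (x : Fin (n + 2) → G) :
    ∑ l ∈ range (n + 2), (-1 : ℤ) ^ l •
      ((∑ j ∈ range (n + 1), (-1 : ℤ) ^ j • f (mixT σ n j (dp x l)))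
        + f (fcons 1 fun i => σ (dp x l i))) = f x := by
  -- Split into prism part `P` and cone part.
  have hsplit : ∑ l ∈ range (n + 2), (-1 : ℤ) ^ l •
      ((∑ j ∈ range (n + 1), (-1 : ℤ) ^ j • f (mixT σ n j (dp x l)))
        + f (fcons 1 fun i => σ (dp x l i)))
      = (∑ l ∈ range (n + 2), ∑ j ∈ range (n + 1),
            (-1 : ℤ) ^ (l + j) • f (mixT σ n j (dp x l)))
        + ∑ l ∈ range (n + 2), (-1 : ℤ) ^ l • f (fcons 1 fun i => σ (dp x l i)) := by
    rw [← Finset.sum_add_distrib]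
    refine Finset.sum_congr rfl fun l _ => ?_
    rw [smul_add]
    congr 1
    rw [Finset.smul_sum]
    exact Finset.sum_congr rfl fun j _ => pow_neg_one_smul_smul l j _
  rw [hsplit]
  -- The cone part sums to `f (σ ∘ x)`.
  have hcone : ∑ l ∈ range (n + 2), (-1 : ℤ) ^ l • f (fcons 1 fun i => σ (dp x l i))
      = f (fun i => σ (x i)) := by
    have h0 := hf (fcons 1 fun i => σ (x i))
    rw [Finset.sum_range_succ'] at h0
    rw [dp_fcons_zero σ x] at h0
    rw [Finset.sum_congr rfl (fun l (_ : l ∈ range (n + 2)) => by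
      rw [dp_fcons_succ σ l x, neg_one_pow_succ_smul])] at h0
    rw [Finset.sum_neg_distrib] at h0
    simp only [pow_zero, one_smul] at h0
    exact neg_add_eq_zero.mp h0
  rw [hcone]
  -- The prism part: show it equals `f x - f (σ ∘ x)`.
  have hP : (∑ l ∈ range (n + 2), ∑ j ∈ range (n + 1),
      (-1 : ℤ) ^ (l + j) • f (mixT σ n j (dp x l)))
      = f x - f (fun i => σ (x i)) := by
    have hS : ∑ j ∈ range (n + 2), (-1 : ℤ) ^ j •
        (∑ l ∈ range (n + 3), (-1 : ℤ) ^ l • f (dp (mixT σ (n + 1) j x) l)) = 0 := by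
      refine Finset.sum_eq_zero fun j _ => ?_
      rw [hf (mixT σ (n + 1) j x), smul_zero]
    -- decompose the inner sum
    have hinner : ∀ j ∈ range (n + 2),
        (-1 : ℤ) ^ j • (∑ l ∈ range (n + 3), (-1 : ℤ) ^ l • f (dp (mixT σ (n + 1) j x) l))
        = ((-1 : ℤ) ^ j • ∑ l ∈ range j, (-1 : ℤ) ^ l • f (mixT σ n (j - 1) (dp x l)))
          + ((f (qmix σ j x) - f (qmix σ (j + 1) x))
          + ((-1 : ℤ) ^ j • ∑ l ∈ Ico (j + 2) (n + 3),
              (-1 : ℤ) ^ l • f (mixT σ n j (dp x (l - 1))))) := by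
      intro j hj
      rw [Finset.mem_range] at hj
      have hj1 : j ≤ n + 1 := by omega
      have e1 : (∑ l ∈ range (n + 3), (-1 : ℤ) ^ l • f (dp (mixT σ (n + 1) j x) l))
          = (∑ l ∈ range j, (-1 : ℤ) ^ l • f (mixT σ n (j - 1) (dp x l)))
            + ((-1 : ℤ) ^ j • f (qmix σ j x)
            + ((-1 : ℤ) ^ (j + 1) • f (qmix σ (j + 1) x)
            + ∑ l ∈ Ico (j + 2) (n + 3), (-1 : ℤ) ^ l • f (mixT σ n j (dp x (l - 1))))) := by
        rw [Finset.range_eq_Ico,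
          ← Finset.sum_Ico_consecutive _ (Nat.zero_le j) (by omega : j ≤ n + 3),
          Finset.sum_eq_sum_Ico_succ_bot (by omega : j < n + 3),
          Finset.sum_eq_sum_Ico_succ_bot (by omega : j + 1 < n + 3),
          ← Finset.range_eq_Ico]
        congr 1
        · refine Finset.sum_congr rfl fun l hl => ?_
          rw [Finset.mem_range] at hl
          rw [dp_mixT_lt σ hj1 hl x]
        congr 1
        · rw [dp_mixT_self σ hj1 x]
        congr 1
        · rw [dp_mixT_succ σ hj1 x]
        · refine Finset.sum_congr rfl fun l hl => ?_
          rw [Finset.mem_Ico] at hl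
          rw [dp_mixT_gt σ (by omega : j ≤ n) (by omega : j + 2 ≤ l) x]
      rw [e1, smul_add, smul_add, smul_add]
      congr 1
      rw [← add_assoc]
      congr 1
      rw [pow_neg_one_smul_smul, pow_neg_one_smul_smul, Even.neg_one_pow ⟨j, rfl⟩, one_smul,
        show j + (j + 1) = 2 * j + 1 by ring, Odd.neg_one_pow ⟨j, rfl⟩, neg_one_zsmul,
        ← sub_eq_add_neg]
    rw [Finset.sum_congr rfl hinner, Finset.sum_add_distrib, Finset.sum_add_distrib] at hS
    -- Evaluate the telescoping middle sum.
    have hTEL : ∑ j ∈ range (n + 2), (f (qmix σ j x) - f (qmix σ (j + 1) x))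
        = f x - f (fun i => σ (x i)) := by
      rw [Finset.sum_range_sub' (fun j => f (qmix σ j x)) (n + 2),
        qmix_zero σ x, qmix_top σ (le_refl (n + 2)) x]
    -- Reindex the first double sum.
    have hSA : ∑ j ∈ range (n + 2),
        (-1 : ℤ) ^ j • ∑ l ∈ range j, (-1 : ℤ) ^ l • f (mixT σ n (j - 1) (dp x l))
        = -∑ j ∈ range (n + 1),
            (-1 : ℤ) ^ j • ∑ l ∈ range (j + 1), (-1 : ℤ) ^ l • f (mixT σ n j (dp x l)) := by
      rw [Finset.sum_range_succ']
      simp only [Nat.add_sub_cancel]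
      rw [Finset.sum_congr rfl (fun j (_ : j ∈ range (n + 1)) => neg_one_pow_succ_smul j _),
        Finset.sum_neg_distrib]
      simp
    -- Reindex the last double sum.
    have hSD : ∑ j ∈ range (n + 2), (-1 : ℤ) ^ j •
          ∑ l ∈ Ico (j + 2) (n + 3), (-1 : ℤ) ^ l • f (mixT σ n j (dp x (l - 1)))
        = -∑ j ∈ range (n + 1), (-1 : ℤ) ^ j •
            ∑ l ∈ Ico (j + 1) (n + 2), (-1 : ℤ) ^ l • f (mixT σ n j (dp x l)) := by
      rw [Finset.sum_range_succ]
      rw [show (n + 1) + 2 = n + 3 by ring, Finset.Ico_self, Finset.sum_empty, smul_zero,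
        add_zero]
      rw [Finset.sum_congr rfl (fun j (hj : j ∈ range (n + 1)) => by
        have : ∑ l ∈ Ico (j + 2) (n + 3), (-1 : ℤ) ^ l • f (mixT σ n j (dp x (l - 1)))
            = ∑ l ∈ Ico (j + 1) (n + 2), -((-1 : ℤ) ^ l • f (mixT σ n j (dp x l))) := by
          rw [Finset.sum_Ico_eq_sum_range, Finset.sum_Ico_eq_sum_range,
            show n + 3 - (j + 2) = n + 2 - (j + 1) by omega]
          refine Finset.sum_congr rfl fun i _ => ?_
          rw [show j + 2 + i - 1 = j + 1 + i by omega,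
            show j + 2 + i = (j + 1 + i) + 1 by omega, neg_one_pow_succ_smul]
        rw [this, Finset.sum_neg_distrib, smul_neg]), Finset.sum_neg_distrib]
    rw [hSA, hSD, hTEL] at hS
    -- Combine the two reindexed double sums into the prism sum.
    have hPBD : (∑ j ∈ range (n + 1),
          (-1 : ℤ) ^ j • ∑ l ∈ range (j + 1), (-1 : ℤ) ^ l • f (mixT σ n j (dp x l)))
        + (∑ j ∈ range (n + 1), (-1 : ℤ) ^ j •
            ∑ l ∈ Ico (j + 1) (n + 2), (-1 : ℤ) ^ l • f (mixT σ n j (dp x l)))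
        = ∑ l ∈ range (n + 2), ∑ j ∈ range (n + 1),
            (-1 : ℤ) ^ (l + j) • f (mixT σ n j (dp x l)) := by
      rw [← Finset.sum_add_distrib]
      have step : ∀ j ∈ range (n + 1),
          ((-1 : ℤ) ^ j • ∑ l ∈ range (j + 1), (-1 : ℤ) ^ l • f (mixT σ n j (dp x l)))
          + ((-1 : ℤ) ^ j • ∑ l ∈ Ico (j + 1) (n + 2), (-1 : ℤ) ^ l • f (mixT σ n j (dp x l)))
          = ∑ l ∈ range (n + 2), (-1 : ℤ) ^ (j + l) • f (mixT σ n j (dp x l)) := by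
        intro j hj
        rw [Finset.mem_range] at hj
        rw [← smul_add, Finset.range_eq_Ico,
          Finset.sum_Ico_consecutive _ (Nat.zero_le (j + 1)) (by omega : j + 1 ≤ n + 2),
          Finset.smul_sum]
        exact Finset.sum_congr (Finset.range_eq_Ico (n + 2)).symm fun l _ => pow_neg_one_smul_smul j l _
      rw [Finset.sum_congr rfl step, Finset.sum_comm]
      refine Finset.sum_congr rfl fun l _ => Finset.sum_congr rfl fun j _ => ?_
      rw [Nat.add_comm j l]
    -- Final bookkeeping.
    have := hS
    -- hS : -PB + ((f x - f σx) + -PD) = 0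
    have hgoal : (∑ l ∈ range (n + 2), ∑ j ∈ range (n + 1),
        (-1 : ℤ) ^ (l + j) • f (mixT σ n j (dp x l)))
        = (∑ j ∈ range (n + 1),
            (-1 : ℤ) ^ j • ∑ l ∈ range (j + 1), (-1 : ℤ) ^ l • f (mixT σ n j (dp x l)))
          + (∑ j ∈ range (n + 1), (-1 : ℤ) ^ j •
              ∑ l ∈ Ico (j + 1) (n + 2), (-1 : ℤ) ^ l • f (mixT σ n j (dp x l))) := hPBD.symm
    rw [hgoal]
    set PB := ∑ j ∈ range (n + 1),
        (-1 : ℤ) ^ j • ∑ l ∈ range (j + 1), (-1 : ℤ) ^ l • f (mixT σ n j (dp x l)) with hPBdef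
    set PD := ∑ j ∈ range (n + 1), (-1 : ℤ) ^ j •
        ∑ l ∈ Ico (j + 1) (n + 2), (-1 : ℤ) ^ l • f (mixT σ n j (dp x l)) with hPDdef
    -- hS : -PB + ((f x - f σx) + -PD) = 0
    have : PB + PD + (-PB + ((f x - f (fun i => σ (x i))) + -PD)) = PB + PD := by
      rw [hS, add_zero]
    calc PB + PD
        = PB + PD + (-PB + ((f x - f (fun i => σ (x i))) + -PD)) := this.symm
      _ = f x - f (fun i => σ (x i)) := by abel
  rw [hP]
  abel

end Prism

section Sigma

variable {G : Type*} [Group G]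

/-- `g` times a chosen representative of `Kg` inverted: an element of `K`. -/
noncomputable def sig0 (K : Subgroup G) (g : G) : G :=
  g * Quotient.out (((g⁻¹ : G) : G ⧸ K))

/-- A locally constant `K`-equivariant retraction `G → K` with `σ 1 = 1`,
satisfying `σ (k g) = k σ (g)` for `k ∈ K`. -/
noncomputable def sig (K : Subgroup G) (g : G) : G :=
  sig0 K g * (sig0 K 1)⁻¹

lemma sig0_mem (K : Subgroup G) (g : G) : sig0 K g ∈ K := by
  have h := (QuotientGroup.out_eq' (((g⁻¹ : G) : G ⧸ K))).symm
  have h2 := QuotientGroup.eq.mp h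
  rwa [inv_inv] at h2

lemma sig0_smul (K : Subgroup G) {k : G} (hk : k ∈ K) (g : G) :
    sig0 K (k * g) = k * sig0 K g := by
  unfold sig0
  have : (((k * g)⁻¹ : G) : G ⧸ K) = ((g⁻¹ : G) : G ⧸ K) := by
    rw [QuotientGroup.eq, inv_inv]
    simpa [mul_assoc] using hk
  rw [this, mul_assoc]

lemma sig_mem (K : Subgroup G) (g : G) : sig K g ∈ K :=
  mul_mem (sig0_mem K g) (inv_mem (sig0_mem K 1))

lemma sig_one (K : Subgroup G) : sig K 1 = 1 := by unfold sig; group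

lemma sig_smul (K : Subgroup G) {k : G} (hk : k ∈ K) (g : G) :
    sig K (k * g) = k * sig K g := by
  unfold sig
  rw [sig0_smul K hk g, mul_assoc]

lemma sig_continuous [TopologicalSpace G] [IsTopologicalGroup G] (K : Subgroup G)
    (hKo : IsOpen (K : Set G)) : Continuous (sig K) := by
  have hρ : IsLocallyConstant (fun g : G => Quotient.out (((g⁻¹ : G) : G ⧸ K))) := by
    rw [IsLocallyConstant.iff_exists_open]
    intro g
    refine ⟨(fun h => h * g⁻¹) ⁻¹' (K : Set G), hKo.preimage (continuous_mul_right g⁻¹),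
      by simpa using K.one_mem, ?_⟩
    intro y hy
    have hyK : y * g⁻¹ ∈ K := hy
    have : ((y⁻¹ : G) : G ⧸ K) = ((g⁻¹ : G) : G ⧸ K) := by
      rw [QuotientGroup.eq, inv_inv]
      exact hyK
    rw [this]
  unfold sig sig0
  exact ((continuous_id.mul hρ.continuous).mul continuous_const)

end Sigma

section Unif

open Finset

variable {G : Type*} [Group G] [TopologicalSpace G]
variable {π : Type*} [AddCommGroup π] [TopologicalSpace π] [DiscreteTopology π]

/-- Uniform local constancy in the first variable over a compact box: there is a
neighbourhood `N` of `1` such that changing the first entry of `fcons 1 z` (with `z`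
valued in the compact `K`) to any `k ∈ N` does not change the value of `f`. -/
lemma exists_unif {m : ℕ} (f : (Fin (m + 2) → G) → π) (hf : Continuous f)
    (K : Subgroup G) (hKc : IsCompact (K : Set G)) :
    ∃ N : Set G, IsOpen N ∧ (1 : G) ∈ N ∧ ∀ k ∈ N, ∀ z : Fin (m + 1) → G,
      (∀ i, z i ∈ (K : Set G)) → f (fcons k z) = f (fcons 1 z) := by
  classical
  set S : Set (Fin (m + 2) → G) :=
    Set.univ.pi (fun i => if (i : ℕ) = 0 then ({1} : Set G) else (K : Set G)) with hSdef
  have hScomp : IsCompact S := isCompact_univ_pi fun i => by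
    by_cases h : (i : ℕ) = 0
    · rw [if_pos h]; exact isCompact_singleton
    · rw [if_neg h]; exact hKc
  have hbox : ∀ w : Fin (m + 2) → G, ∃ U : Fin (m + 2) → Set G,
      (∀ i, IsOpen (U i) ∧ w i ∈ U i) ∧ ∀ z ∈ Set.univ.pi U, f z = f w := by
    intro w
    have hop : IsOpen (f ⁻¹' {f w}) := (isOpen_discrete ({f w} : Set π)).preimage hf
    obtain ⟨I, u, hu, hsub⟩ := isOpen_pi_iff.mp hop w (by simp)
    refine ⟨fun i => if i ∈ I then u i else Set.univ, fun i => ?_, fun z hz => ?_⟩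
    · dsimp only
      by_cases hi : i ∈ I
      · rw [if_pos hi]; exact ⟨(hu i hi).1, (hu i hi).2⟩
      · rw [if_neg hi]; exact ⟨isOpen_univ, trivial⟩
    · have hz' : z ∈ (↑I : Set (Fin (m + 2))).pi u := by
        intro i hi
        have h1 : z i ∈ (if i ∈ I then u i else Set.univ) := hz i trivial
        rwa [if_pos (Finset.mem_coe.mp hi)] at h1
      simpa using hsub hz'
  choose U hU1 hU2 using hbox
  obtain ⟨t, ht⟩ := hScomp.elim_finite_subcover
    (fun w : ↥S => Set.univ.pi (U ↑w))
    (fun w => isOpen_set_pi Set.finite_univ fun i _ => (hU1 (↑w) i).1)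
    (fun w hw => Set.mem_iUnion.mpr ⟨⟨w, hw⟩, fun i _ => (hU1 w i).2⟩)
  refine ⟨⋂ w ∈ t, U (↑w) 0, isOpen_biInter_finset fun w _ => (hU1 (↑w) 0).1, ?_, ?_⟩
  · refine Set.mem_iInter₂.mpr fun w _ => ?_
    have hw0 : (w : Fin (m + 2) → G) 0 = 1 := by
      have h0 : (w : Fin (m + 2) → G) 0 ∈
          (if ((0 : Fin (m + 2)) : ℕ) = 0 then ({1} : Set G) else (K : Set G)) :=
        w.2 0 trivial
      rwa [if_pos (by simp), Set.mem_singleton_iff] at h0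
    rw [← hw0]
    exact (hU1 (↑w) 0).2
  · intro k hk z hz
    have hmem1 : fcons (1 : G) z ∈ S := by
      intro i _
      show fcons (1 : G) z i ∈ (if (i : ℕ) = 0 then ({1} : Set G) else (K : Set G))
      by_cases hi : (i : ℕ) = 0
      · rw [if_pos hi]
        simp only [fcons, if_pos hi]
        exact Set.mem_singleton _
      · rw [if_neg hi]
        simp only [fcons, if_neg hi]
        exact hz _
    obtain ⟨w, hwt, hwmem⟩ := Set.mem_iUnion₂.mp (ht hmem1)
    have hkw : k ∈ U (↑w) 0 := Set.mem_iInter₂.mp hk w hwt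
    have hmem2 : fcons k z ∈ Set.univ.pi (U ↑w) := by
      intro i _
      show fcons k z i ∈ U (↑w) i
      by_cases hi : (i : ℕ) = 0
      · have hieq : i = 0 := Fin.ext hi
        subst hieq
        simpa only [fcons, Fin.val_zero, ↓reduceIte] using hkw
      · have heq : fcons k z i = fcons (1 : G) z i := by
          simp only [fcons, if_neg hi]
        rw [heq]
        exact hwmem i trivial
    calc f (fcons k z) = f ↑w := hU2 (↑w) _ hmem2
      _ = f (fcons 1 z) := (hU2 (↑w) _ hwmem).symm

end Unif

section ContDiscrete

variable {X : Type*} [TopologicalSpace X]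
variable {π : Type*} [TopologicalSpace π] [DiscreteTopology π]

lemma continuous_add_discrete [AddCommMonoid π] {f g : X → π} (hf : Continuous f)
    (hg : Continuous g) : Continuous fun x => f x + g x :=
  (continuous_of_discreteTopology (f := fun p : π × π => p.1 + p.2)).comp (hf.prodMk hg)

lemma continuous_discrete_sum [AddCommMonoid π] {ι : Type*} (s : Finset ι) (F : ι → X → π)
    (hF : ∀ i ∈ s, Continuous (F i)) : Continuous fun x => ∑ i ∈ s, F i x := by
  classical
  induction s using Finset.induction_on with
  | empty => simpa using continuous_const
  | @insert a s ha ih =>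
      have h1 := hF a (Finset.mem_insert_self a s)
      have h2 := ih fun i hi => hF i (Finset.mem_insert_of_mem hi)
      simpa only [Finset.sum_insert ha] using continuous_add_discrete h1 h2

end ContDiscrete

section ZsmulComm

lemma zsmul_act_comm {G : Type*} [Monoid G] {π : Type*} [AddCommGroup π]
    [DistribMulAction G π] (g : G) (c : ℤ) (v : π) : g • (c • v) = c • (g • v) :=
  (DistribMulAction.toAddMonoidHom π g).map_zsmul c v

end ZsmulComm

section DmapRange

open Finset

variable (G : Type*) [Group G] [TopologicalSpace G]
variable (V : Type*) [AddCommGroup V] [TopologicalSpace V] [DistribMulAction G V]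

lemma dmap_eq_range (m : ℕ) (F : (Fin (m + 1) → G) → V) (x : Fin (m + 2) → G) :
    dmap G V m F x = ∑ l ∈ range (m + 2), (-1 : ℤ) ^ l • F (dp x l) := by
  unfold dmap
  rw [← Fin.sum_univ_eq_sum_range (fun l => (-1 : ℤ) ^ l • F (dp x l)) (m + 2)]
  exact Finset.sum_congr rfl fun i _ => rfl

end DmapRange

theorem smooth_cochain_resolution_exact'
    {G : Type*} [Group G] [TopologicalSpace G] [IsTopologicalGroup G]
    (hG : LocallyProfinite G)
    {k : Type*} [CommRing k]
    {π : Type*} [AddCommGroup π] [Module k π] [TopologicalSpace π] [DiscreteTopology π]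
    [DistribMulAction G π] [SMulCommClass G k π]
    (hsm : ∀ v : π, IsOpen {g : G | g • v = v}) :
    (∀ v : π, IsSmoothCochain G π (aug G π v)) ∧
    (∀ (n : ℕ) (f : (Fin (n + 1) → G) → π),
        IsSmoothCochain G π f → IsSmoothCochain G π (dmap G π n f)) ∧
    Function.Injective (aug G π) ∧
    (∀ f : (Fin 1 → G) → π, IsSmoothCochain G π f →
        (dmap G π 0 f = 0 ↔ ∃ v : π, f = aug G π v)) ∧
    (∀ (n : ℕ) (f : (Fin (n + 2) → G) → π), IsSmoothCochain G π f →
        (dmap G π (n + 1) f = 0 ↔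
          ∃ h : (Fin (n + 1) → G) → π, IsSmoothCochain G π h ∧ dmap G π n h = f)) := by
  classical
  open Finset in
  refine ⟨?_, ?_, ?_, ?_, ?_⟩
  -- (1) the augmentation takes values in smooth vectors
  · intro v
    refine ⟨continuous_const, ?_⟩
    obtain ⟨K, hKc, hKo, hKsub⟩ := hG {g | g • v = v} ((hsm v).mem_nhds (by simp))
    refine ⟨K, hKc, hKo, fun g hg => funext fun x => ?_⟩
    have hv : g • v = v := hKsub hg
    simp [cAct, aug, hv]
  -- (2) the differential preserves smooth cochains
  · rintro n f ⟨hfc, K, hKc, hKo, hKinv⟩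
    constructor
    · show Continuous (dmap G π n f)
      unfold dmap
      apply continuous_discrete_sum
      intro i _
      have h1 : Continuous fun x : Fin (n + 2) → G => (fun j => x (i.succAbove j)) :=
        continuous_pi fun j => continuous_apply _
      exact continuous_of_discreteTopology.comp (hfc.comp h1)
    · refine ⟨K, hKc, hKo, fun g hg => funext fun x => ?_⟩
      have hfg : ∀ z : Fin (n + 1) → G, g • f (fun i => g⁻¹ * z i) = f z :=
        fun z => congrFun (hKinv g hg) z
      simp only [cAct, dmap]
      rw [Finset.smul_sum]
      refine Finset.sum_congr rfl fun i _ => ?_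
      rw [zsmul_act_comm]
      congr 1
      exact hfg _
  -- (3) injectivity of the augmentation
  · intro v w h
    exact congrFun h (fun _ => 1)
  -- (4) exactness at C^0
  · intro f hf
    constructor
    · intro hdf
      have key : ∀ a b : G, f (fun _ => a) = f (fun _ => b) := by
        intro a b
        have h : (∑ i : Fin 2, ((-1 : ℤ) ^ (i : ℕ)) •
            f (fun j => (![b, a] : Fin 2 → G) (i.succAbove j))) = 0 :=
          congrFun hdf ![b, a]
        simp only [Fin.sum_univ_two, Fin.val_zero, Fin.val_one,
          pow_zero, one_smul, pow_one, neg_one_zsmul] at h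
        have e0 : (fun j : Fin 1 => (![b, a] : Fin 2 → G) ((0 : Fin 2).succAbove j))
            = fun _ => a := by
          funext j
          have hj : j = 0 := Subsingleton.elim _ _
          subst hj
          rfl
        have e1 : (fun j : Fin 1 => (![b, a] : Fin 2 → G) ((1 : Fin 2).succAbove j))
            = fun _ => b := by
          funext j
          have hj : j = 0 := Subsingleton.elim _ _
          subst hj
          rfl
        rw [e0, e1] at h
        exact (add_neg_eq_zero.mp h)
      refine ⟨f (fun _ => 1), funext fun y => ?_⟩
      have hy : y = fun _ => y 0 := funext fun t => by rw [Subsingleton.elim t 0]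
      calc f y = f (fun _ => y 0) := by rw [← hy]
        _ = f (fun _ => 1) := key (y 0) 1
        _ = aug G π (f fun _ => 1) y := rfl
    · rintro ⟨v, rfl⟩
      funext x
      show (∑ i : Fin 2, ((-1 : ℤ) ^ (i : ℕ)) • aug G π v (fun j => x (i.succAbove j)))
          = (0 : (Fin 2 → G) → π) x
      simp [aug, Fin.sum_univ_two]
  -- (5) exactness in higher degrees
  · intro n f hsmf
    obtain ⟨hfc, K, hKc, hKo, hKinv⟩ := hsmf
    constructor
    · intro hdf
      have hfr : ∀ z : Fin (n + 3) → G,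
          ∑ l ∈ Finset.range (n + 3), (-1 : ℤ) ^ l • f (dp z l) = 0 := by
        intro z
        rw [← dmap_eq_range G π (n + 1) f z]
        exact congrFun hdf z
      set σ := sig K with hσdef
      have hσ_smul : ∀ {k₀ : G}, k₀ ∈ K → ∀ g : G, σ (k₀ * g) = k₀ * σ g := by
        intro k₀ hk g; rw [hσdef]; exact sig_smul K hk g
      have hσ_mem : ∀ g : G, σ g ∈ K := by
        intro g; rw [hσdef]; exact sig_mem K g
      have hσ_cont : Continuous σ := by rw [hσdef]; exact sig_continuous K hKo
      obtain ⟨N, hNo, hN1, hNuni⟩ := exists_unif f hfc K hKc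
      obtain ⟨K', hK'c, hK'o, hK'sub⟩ := hG (N ∩ (K : Set G))
        (Filter.inter_mem (hNo.mem_nhds hN1) (hKo.mem_nhds K.one_mem))
      refine ⟨fun y => (∑ j ∈ Finset.range (n + 1), (-1 : ℤ) ^ j • f (mixT σ n j y))
          + f (fcons 1 fun i => σ (y i)), ⟨?_, K', hK'c, hK'o, ?_⟩, ?_⟩
      -- continuity of the homotopy
      · have hσc : Continuous σ := hσ_cont
        have h1 : Continuous fun y : Fin (n + 1) → G =>
            ∑ j ∈ Finset.range (n + 1), (-1 : ℤ) ^ j • f (mixT σ n j y) := by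
          apply continuous_discrete_sum
          intro j _
          have hmix : Continuous fun y : Fin (n + 1) → G => mixT σ n j y := by
            apply continuous_pi
            intro i
            by_cases h : (i : ℕ) ≤ j ∧ (i : ℕ) ≤ n
            · simp only [mixT, if_pos h]
              exact hσc.comp (continuous_apply _)
            · simp only [mixT, if_neg h]
              exact continuous_apply _
          exact continuous_of_discreteTopology.comp (hfc.comp hmix)
        have h2 : Continuous fun y : Fin (n + 1) → G => f (fcons 1 fun i => σ (y i)) := by
          have hc : Continuous fun y : Fin (n + 1) → G =>
              (fcons 1 fun i => σ (y i) : Fin (n + 2) → G) := by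
            apply continuous_pi
            intro i
            by_cases h : (i : ℕ) = 0
            · simp only [fcons, if_pos h]
              exact continuous_const
            · simp only [fcons, if_neg h]
              exact hσc.comp (continuous_apply _)
          exact hfc.comp hc
        exact continuous_add_discrete h1 h2
      -- smoothness (invariance under K')
      · intro g hg
        have hgN : g ∈ N := (hK'sub hg).1
        have hgK : g ∈ K := (hK'sub hg).2
        funext y
        show g • _ = _
        rw [smul_add]
        congr 1
        · rw [Finset.smul_sum]
          refine Finset.sum_congr rfl fun j _ => ?_
          rw [zsmul_act_comm]
          congr 1
          have hmix : mixT σ n j (fun i => g⁻¹ * y i) = fun i => g⁻¹ * mixT σ n j y i := by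
            funext i
            simp only [mixT]
            split_ifs with h
            · exact hσ_smul (inv_mem hgK) _
            · rfl
          rw [hmix]
          exact congrFun (hKinv g hgK) (mixT σ n j y)
        · have hc1 : (fcons 1 fun i => σ (g⁻¹ * y i) : Fin (n + 2) → G)
              = fun i => g⁻¹ * (fcons g fun i => σ (y i)) i := by
            funext i
            simp only [fcons]
            split_ifs with h
            · exact (inv_mul_cancel g).symm
            · rw [hσ_smul (inv_mem hgK)]
          calc g • f (fcons 1 fun i => σ (g⁻¹ * y i))
              = g • f (fun i => g⁻¹ * (fcons g fun i => σ (y i)) i) := by rw [hc1]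
            _ = f (fcons g fun i => σ (y i)) := congrFun (hKinv g hgK) _
            _ = f (fcons 1 fun i => σ (y i)) := hNuni g hgN _ (fun i => hσ_mem _)
      -- the homotopy is a preimage under d
      · funext x
        rw [dmap_eq_range]
        exact prism_cone_sum σ n f hfr x
    · rintro ⟨h, hhsm, rfl⟩
      funext x
      show dmap G π (n + 1) (dmap G π n h) x = (0 : (Fin (n + 3) → G) → π) x
      rw [dmap_eq_range, Pi.zero_apply]
      rw [Finset.sum_congr rfl fun l (_ : l ∈ Finset.range (n + 3)) =>
        by rw [dmap_eq_range G π n h (dp x l)]]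
      exact dd_sum_zero n h x


/-- **Smooth vectors of the continuous cochain complex give a resolution.**
Let `G` be a locally profinite group, `k` a commutative ring and `π` a smooth
`k`-representation of `G`, regarded as a discrete topological `G`-module. Applying the
smooth-vectors functor `(-)^sm` to the complex of continuous cochains yields an exact
resolution `0 → π → C^0(G,π)^sm → C^1(G,π)^sm → ⋯` of `π` in the category of smooth
`k`-representations of `G`. -/
theorem smooth_cochain_resolution_exact
    {G : Type*} [Group G] [TopologicalSpace G] [IsTopologicalGroup G]
    (hG : LocallyProfinite G)
    {k : Type*} [CommRing k]
    {π : Type*} [AddCommGroup π] [Module k π] [TopologicalSpace π] [DiscreteTopology π]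
    [DistribMulAction G π] [SMulCommClass G k π]
    (hsm : ∀ v : π, IsOpen {g : G | g • v = v}) :
    -- the complex and the augmentation take values in smooth vectors
    (∀ v : π, IsSmoothCochain G π (aug G π v)) ∧
    (∀ (n : ℕ) (f : (Fin (n + 1) → G) → π),
        IsSmoothCochain G π f → IsSmoothCochain G π (dmap G π n f)) ∧
    -- exactness at π
    Function.Injective (aug G π) ∧
    -- exactness at C^0(G,π)^sm
    (∀ f : (Fin 1 → G) → π, IsSmoothCochain G π f →
        (dmap G π 0 f = 0 ↔ ∃ v : π, f = aug G π v)) ∧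
    -- exactness at C^{n+1}(G,π)^sm
    (∀ (n : ℕ) (f : (Fin (n + 2) → G) → π), IsSmoothCochain G π f →
        (dmap G π (n + 1) f = 0 ↔
          ∃ h : (Fin (n + 1) → G) → π, IsSmoothCochain G π h ∧ dmap G π n h = f)) := by
  exact smooth_cochain_resolution_exact' (k := k) hG hsm

end CtsCoh
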